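/- Let p₁, p₂, p₃, p₄ ∈ ℂ³ be nonzero null vectors (⟨pᵢ,pᵢ⟩ = 0) whose pairwise Hermitian pairings are nonzero (⟨pᵢ,pⱼ⟩ ≠ 0 for i ≠ j), and set 𝕏₁ = 𝕏(p₁,p₂,p₃,p₄), 𝕏₂ = 𝕏(p₁,p₃,p₂,p₄), 𝕏₃ = 𝕏(p₂,p₃,p₁,p₄). If one of the equalities |𝕏₁|^{1/2} + |𝕏₂|^{1/2} = 1, |𝕏₁|^{1/2} − |𝕏₂|^{1/2} = 1, or |𝕏₂|^{1/2} − |𝕏₁|^{1/2} = 1 holds, then 𝕏₁, 𝕏₂, and 𝕏₃ are all positive real numbers. -/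

import Mathlib

/-- The Hermitian form of signature (2,1) on ℂ³:
`⟨z,w⟩ = z₁·conj(w₃) + z₂·conj(w₂) + z₃·conj(w₁)`. -/
noncomputable def herm (z w : Fin 3 → ℂ) : ℂ :=
  z 0 * starRingEnd ℂ (w 2) + z 1 * starRingEnd ℂ (w 1) + z 2 * starRingEnd ℂ (w 0)

/-- The Korányi–Reimann complex cross-ratio. -/
noncomputable def crossRatio (p₁ p₂ p₃ p₄ : Fin 3 → ℂ) : ℂ :=
  (herm p₃ p₁ * herm p₄ p₂) / (herm p₄ p₁ * herm p₃ p₂)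

local notation "K" => starRingEnd ℂ

theorem herm_conj' (z w : Fin 3 → ℂ) : herm w z = K (herm z w) := by
  simp [herm, map_add, map_mul]; ring

theorem det_fin_four' (A : Matrix (Fin 4) (Fin 4) ℂ) : A.det =
    A 0 0*A 1 1*A 2 2*A 3 3 - A 0 0*A 1 1*A 2 3*A 3 2 - A 0 0*A 1 2*A 2 1*A 3 3
    + A 0 0*A 1 2*A 2 3*A 3 1 + A 0 0*A 1 3*A 2 1*A 3 2 - A 0 0*A 1 3*A 2 2*A 3 1
    - A 0 1*A 1 0*A 2 2*A 3 3 + A 0 1*A 1 0*A 2 3*A 3 2 + A 0 1*A 1 2*A 2 0*A 3 3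
    - A 0 1*A 1 2*A 2 3*A 3 0 - A 0 1*A 1 3*A 2 0*A 3 2 + A 0 1*A 1 3*A 2 2*A 3 0
    + A 0 2*A 1 0*A 2 1*A 3 3 - A 0 2*A 1 0*A 2 3*A 3 1 - A 0 2*A 1 1*A 2 0*A 3 3
    + A 0 2*A 1 1*A 2 3*A 3 0 + A 0 2*A 1 3*A 2 0*A 3 1 - A 0 2*A 1 3*A 2 1*A 3 0
    - A 0 3*A 1 0*A 2 1*A 3 2 + A 0 3*A 1 0*A 2 2*A 3 1 + A 0 3*A 1 1*A 2 0*A 3 2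
    - A 0 3*A 1 1*A 2 2*A 3 0 - A 0 3*A 1 2*A 2 0*A 3 1 + A 0 3*A 1 2*A 2 1*A 3 0 := by
  rw [Matrix.det_succ_row_zero]
  simp [Fin.sum_univ_succ, Matrix.det_fin_three, Fin.succAbove,
    show (2:Fin 3).succ = (3:Fin 4) from rfl, show Fin.castSucc (2:Fin 3) = (2:Fin 4) from rfl]
  ring

open Matrix in
theorem gram_det_zero' (p : Fin 4 → Fin 3 → ℂ) :
    (Matrix.of (fun i j => herm (p i) (p j))).det = 0 := by
  have : Matrix.of (fun i j => herm (p i) (p j)) =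
      (Matrix.of (fun (i k : Fin 4) => if h : (k:ℕ) < 3 then p i ⟨k, h⟩ else 0)) *
      (Matrix.of (fun (k : Fin 4) (j : Fin 4) =>
        if h : (k:ℕ) < 3 then K (p j ⟨2 - k, by omega⟩) else 0)) := by
    ext i j
    simp [Matrix.mul_apply, Fin.sum_univ_four, herm]
  rw [this, Matrix.det_mul]
  have : (Matrix.of (fun (k : Fin 4) (j : Fin 4) =>
        if h : (k:ℕ) < 3 then K (p j ⟨2 - k, by omega⟩) else 0)).det = 0 := by
    apply Matrix.det_eq_zero_of_row_eq_zero 3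
    intro j
    simp
  rw [this, mul_zero]

theorem key_identity' (p : Fin 4 → Fin 3 → ℂ) (hnull : ∀ i, herm (p i) (p i) = 0) :
    K (herm (p 0) (p 1)) * herm (p 0) (p 1) * K (herm (p 2) (p 3)) * herm (p 2) (p 3)
    + K (herm (p 0) (p 2)) * herm (p 0) (p 2) * K (herm (p 1) (p 3)) * herm (p 1) (p 3)
    + K (herm (p 0) (p 3)) * herm (p 0) (p 3) * K (herm (p 1) (p 2)) * herm (p 1) (p 2)
    = K (herm (p 0) (p 1)) * K (herm (p 1) (p 2)) * K (herm (p 2) (p 3)) * herm (p 0) (p 3)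
    + K (herm (p 0) (p 3)) * herm (p 0) (p 1) * herm (p 1) (p 2) * herm (p 2) (p 3)
    + K (herm (p 0) (p 1)) * K (herm (p 1) (p 3)) * herm (p 0) (p 2) * herm (p 2) (p 3)
    + K (herm (p 0) (p 2)) * K (herm (p 2) (p 3)) * herm (p 0) (p 1) * herm (p 1) (p 3)
    + K (herm (p 0) (p 2)) * K (herm (p 1) (p 3)) * herm (p 0) (p 3) * herm (p 1) (p 2)
    + K (herm (p 0) (p 3)) * K (herm (p 1) (p 2)) * herm (p 0) (p 2) * herm (p 1) (p 3) := by
  have h := gram_det_zero' p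
  rw [det_fin_four'] at h
  simp only [Matrix.of_apply] at h
  rw [hnull 0, hnull 1, hnull 2, hnull 3] at h
  rw [herm_conj' (p 0) (p 1), herm_conj' (p 0) (p 2), herm_conj' (p 0) (p 3),
      herm_conj' (p 1) (p 2), herm_conj' (p 1) (p 3), herm_conj' (p 2) (p 3)] at h
  linear_combination h

theorem hA1_lemma (a b c d e f : ℂ) (hc : c ≠ 0) (hd : d ≠ 0)
    (hdet : K a * a * K f * f + K b * b * K e * e + K c * c * K d * d
    = K a * K d * K f * c + K c * a * d * f + K a * K e * b * f
      + K b * K f * a * e + K b * K e * c * d + K c * K d * b * e) :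
    K ((K b * K e) / (K c * K d)) * ((K b * K e) / (K c * K d))
      + K ((K a * K f) / (K c * d)) * ((K a * K f) / (K c * d)) + 1
    = (K b * K e) / (K c * K d) + K ((K b * K e) / (K c * K d))
      + (K a * K f) / (K c * d) + K ((K a * K f) / (K c * d))
      + (K a * b * K e * f) / (c * K c * d * K d)
      + K ((K a * b * K e * f) / (c * K c * d * K d)) := by
  have hcc : K c ≠ 0 := (map_ne_zero (starRingEnd ℂ)).mpr hc
  have hcd : K d ≠ 0 := (map_ne_zero (starRingEnd ℂ)).mpr hd
  have hD : c * K c * d * K d ≠ 0 :=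
    mul_ne_zero (mul_ne_zero (mul_ne_zero hc hcc) hd) hcd
  have E1 : K ((K b * K e) / (K c * K d)) * ((K b * K e) / (K c * K d))
      = (b * K b * e * K e) / (c * K c * d * K d) := by
    simp only [map_div₀, map_mul, Complex.conj_conj]
    rw [div_mul_div_comm, div_eq_div_iff (by exact mul_ne_zero (mul_ne_zero hc hd) (mul_ne_zero hcc hcd)) hD]
    ring
  have E2 : K ((K a * K f) / (K c * d)) * ((K a * K f) / (K c * d))
      = (a * K a * f * K f) / (c * K c * d * K d) := by
    simp only [map_div₀, map_mul, Complex.conj_conj]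
    rw [div_mul_div_comm, div_eq_div_iff (by exact mul_ne_zero (mul_ne_zero hc hcd) (mul_ne_zero hcc hd)) hD]
    ring
  have EX1 : (K b * K e) / (K c * K d) = (K b * K e * c * d) / (c * K c * d * K d) := by
    rw [div_eq_div_iff (mul_ne_zero hcc hcd) hD]; ring
  have EX1' : K ((K b * K e) / (K c * K d)) = (b * e * K c * K d) / (c * K c * d * K d) := by
    simp only [map_div₀, map_mul, Complex.conj_conj]
    rw [div_eq_div_iff (mul_ne_zero hc hd) hD]; ring
  have EX2 : (K a * K f) / (K c * d) = (K a * K f * c * K d) / (c * K c * d * K d) := by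
    rw [div_eq_div_iff (mul_ne_zero hcc hd) hD]; ring
  have EX2' : K ((K a * K f) / (K c * d)) = (a * f * K c * d) / (c * K c * d * K d) := by
    simp only [map_div₀, map_mul, Complex.conj_conj]
    rw [div_eq_div_iff (mul_ne_zero hc hcd) hD]; ring
  have Ew' : K ((K a * b * K e * f) / (c * K c * d * K d))
      = (a * K b * e * K f) / (c * K c * d * K d) := by
    simp only [map_div₀, map_mul, Complex.conj_conj]
    rw [div_eq_div_iff (mul_ne_zero (mul_ne_zero (mul_ne_zero hcc hc) hcd) hd) hD]
    ring
  rw [E1, E2, EX1', EX2', Ew', EX1, EX2,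
    show (1:ℂ) = (c * K c * d * K d) / (c * K c * d * K d) from (div_self hD).symm,
    ← add_div, ← add_div, ← add_div, ← add_div,
    ← add_div, ← add_div, ← add_div]
  rw [div_eq_div_iff hD hD]
  linear_combination (c * K c * d * K d) * hdet

theorem real_pos_of_re_eq_abs {z : ℂ} (hz : z ≠ 0) (h : z.re = ‖z‖) :
    z.im = 0 ∧ 0 < z.re := by
  have h1 : (‖z‖)^2 = z.re^2 + z.im^2 := by
    rw [Complex.sq_norm, Complex.normSq_apply]; ring
  have h2 : z.im^2 = 0 := by
    linear_combination -h1 - (‖z‖ + z.re) * h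
  have him : z.im = 0 := sq_eq_zero_iff.mp h2
  exact ⟨him, h ▸ norm_pos_iff.mpr hz⟩

theorem analytic_lemma (X1 X2 w : ℂ) (hw : ‖w‖ = ‖X1‖ * ‖X2‖)
    (hX1 : X1 ≠ 0) (hX2 : X2 ≠ 0) (hwne : w ≠ 0)
    (hA1 : K X1 * X1 + K X2 * X2 + 1 = X1 + K X1 + X2 + K X2 + w + K w)
    (heq : Real.sqrt (‖X1‖) + Real.sqrt (‖X2‖) = 1
      ∨ Real.sqrt (‖X1‖) - Real.sqrt (‖X2‖) = 1
      ∨ Real.sqrt (‖X2‖) - Real.sqrt (‖X1‖) = 1) :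
    (X1.im = 0 ∧ 0 < X1.re) ∧ (X2.im = 0 ∧ 0 < X2.re) ∧ (w.im = 0 ∧ 0 < w.re) := by
  set x := ‖X1‖ with hx
  set y := ‖X2‖ with hy
  have hx0 : 0 ≤ x := norm_nonneg _
  have hy0 : 0 ≤ y := norm_nonneg _
  have hsx : Real.sqrt x ^ 2 = x := Real.sq_sqrt hx0
  have hsy : Real.sqrt y ^ 2 = y := Real.sq_sqrt hy0
  have hB : x^2 + y^2 + 1 = 2*x + 2*y + 2*(x*y) := by
    rw [← hsx, ← hsy]
    rcases heq with h | h | h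
    · linear_combination (((Real.sqrt x - Real.sqrt y)^2 - 1) * (Real.sqrt x + Real.sqrt y + 1)) * h
    · linear_combination (((Real.sqrt x + Real.sqrt y)^2 - 1) * (Real.sqrt x - Real.sqrt y + 1)) * h
    · linear_combination (((Real.sqrt x + Real.sqrt y)^2 - 1) * (Real.sqrt y - Real.sqrt x + 1)) * h
  have hRe : x^2 + y^2 + 1 = 2*X1.re + 2*X2.re + 2*w.re := by
    have := congrArg Complex.re hA1
    simp only [Complex.add_re, Complex.mul_re, Complex.conj_re, Complex.conj_im,
      Complex.one_re] at this
    rw [hx, hy, Complex.sq_norm, Complex.sq_norm, Complex.normSq_apply, Complex.normSq_apply]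
    linarith [this]
  have hr1 : X1.re ≤ x := Complex.re_le_norm X1
  have hr2 : X2.re ≤ y := Complex.re_le_norm X2
  have hrw : w.re ≤ x * y := hw ▸ Complex.re_le_norm w
  have e1 : X1.re = x := by linarith
  have e2 : X2.re = y := by linarith
  have ew : w.re = x * y := by linarith
  exact ⟨real_pos_of_re_eq_abs hX1 e1, real_pos_of_re_eq_abs hX2 e2,
    real_pos_of_re_eq_abs hwne (by rw [ew, hw])⟩

theorem habs_lemma (a b c d e f : ℂ) (hc : c ≠ 0) (hd : d ≠ 0) :
    ‖(K a * b * K e * f) / (c * K c * d * K d)‖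
    = ‖(K b * K e) / (K c * K d)‖ * ‖(K a * K f) / (K c * d)‖ := by
  have hC : ‖c‖ ≠ 0 := norm_ne_zero_iff.mpr hc
  have hD : ‖d‖ ≠ 0 := norm_ne_zero_iff.mpr hd
  simp only [norm_div, norm_mul, Complex.norm_conj]
  field_simp

theorem hX3_lemma (a b c d e f : ℂ) (hb : b ≠ 0) (hc : c ≠ 0) (hd : d ≠ 0) (he : e ≠ 0) :
    (a * K f) / (K e * b)
    = K ((K a * b * K e * f) / (c * K c * d * K d))
      / (((K b * K e) / (K c * K d)) * K ((K b * K e) / (K c * K d))) := by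
  have hcb : K b ≠ 0 := (map_ne_zero (starRingEnd ℂ)).mpr hb
  have hcc : K c ≠ 0 := (map_ne_zero (starRingEnd ℂ)).mpr hc
  have hcd : K d ≠ 0 := (map_ne_zero (starRingEnd ℂ)).mpr hd
  have hce : K e ≠ 0 := (map_ne_zero (starRingEnd ℂ)).mpr he
  have hden1 : K e * b ≠ 0 := mul_ne_zero hce hb
  have hden2 : K c * c * K d * d * (K b * K e * (b * e)) ≠ 0 :=
    mul_ne_zero (mul_ne_zero (mul_ne_zero (mul_ne_zero hcc hc) hcd) hd)
      (mul_ne_zero (mul_ne_zero hcb hce) (mul_ne_zero hb he))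
  simp only [map_div₀, map_mul, Complex.conj_conj]
  rw [div_mul_div_comm, div_div_div_eq]
  rw [div_eq_div_iff hden1 hden2]
  ring

theorem crossRatios_positive_of_equality
    (p : Fin 4 → Fin 3 → ℂ)
    (hne : ∀ i, p i ≠ 0)
    (hnull : ∀ i, herm (p i) (p i) = 0)
    (hpair : ∀ i j, i ≠ j → herm (p i) (p j) ≠ 0)
    (heq : Real.sqrt (‖crossRatio (p 0) (p 1) (p 2) (p 3)‖)
          + Real.sqrt (‖crossRatio (p 0) (p 2) (p 1) (p 3)‖) = 1
      ∨ Real.sqrt (‖crossRatio (p 0) (p 1) (p 2) (p 3)‖)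
          - Real.sqrt (‖crossRatio (p 0) (p 2) (p 1) (p 3)‖) = 1
      ∨ Real.sqrt (‖crossRatio (p 0) (p 2) (p 1) (p 3)‖)
          - Real.sqrt (‖crossRatio (p 0) (p 1) (p 2) (p 3)‖) = 1) :
    ((crossRatio (p 0) (p 1) (p 2) (p 3)).im = 0
        ∧ 0 < (crossRatio (p 0) (p 1) (p 2) (p 3)).re)
    ∧ ((crossRatio (p 0) (p 2) (p 1) (p 3)).im = 0
        ∧ 0 < (crossRatio (p 0) (p 2) (p 1) (p 3)).re)
    ∧ ((crossRatio (p 1) (p 2) (p 0) (p 3)).im = 0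
        ∧ 0 < (crossRatio (p 1) (p 2) (p 0) (p 3)).re) := by
  have ha : herm (p 0) (p 1) ≠ 0 := hpair 0 1 (by decide)
  have hb : herm (p 0) (p 2) ≠ 0 := hpair 0 2 (by decide)
  have hc : herm (p 0) (p 3) ≠ 0 := hpair 0 3 (by decide)
  have hd : herm (p 1) (p 2) ≠ 0 := hpair 1 2 (by decide)
  have he : herm (p 1) (p 3) ≠ 0 := hpair 1 3 (by decide)
  have hf : herm (p 2) (p 3) ≠ 0 := hpair 2 3 (by decide)
  have hdet := key_identity' p hnull
  set a := herm (p 0) (p 1) with ha_def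
  set b := herm (p 0) (p 2) with hb_def
  set c := herm (p 0) (p 3) with hc_def
  set d := herm (p 1) (p 2) with hd_def
  set e := herm (p 1) (p 3) with he_def
  set f := herm (p 2) (p 3) with hf_def
  have hX1 : crossRatio (p 0) (p 1) (p 2) (p 3) = (K b * K e) / (K c * K d) := by
    unfold crossRatio
    rw [herm_conj' (p 0) (p 2), herm_conj' (p 1) (p 3), herm_conj' (p 0) (p 3),
      herm_conj' (p 1) (p 2)]
  have hX2 : crossRatio (p 0) (p 2) (p 1) (p 3) = (K a * K f) / (K c * d) := by
    unfold crossRatio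
    rw [herm_conj' (p 0) (p 1), herm_conj' (p 2) (p 3), herm_conj' (p 0) (p 3)]
  have hX3 : crossRatio (p 1) (p 2) (p 0) (p 3) = (a * K f) / (K e * b) := by
    unfold crossRatio
    rw [herm_conj' (p 2) (p 3), herm_conj' (p 1) (p 3)]
  rw [hX1, hX2] at heq ⊢
  rw [hX3]
  have hcb : K b ≠ 0 := (map_ne_zero (starRingEnd ℂ)).mpr hb
  have hcc : K c ≠ 0 := (map_ne_zero (starRingEnd ℂ)).mpr hc
  have hcd : K d ≠ 0 := (map_ne_zero (starRingEnd ℂ)).mpr hd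
  have hce : K e ≠ 0 := (map_ne_zero (starRingEnd ℂ)).mpr he
  have hca : K a ≠ 0 := (map_ne_zero (starRingEnd ℂ)).mpr ha
  have hcf : K f ≠ 0 := (map_ne_zero (starRingEnd ℂ)).mpr hf
  have hX1ne : (K b * K e) / (K c * K d) ≠ 0 :=
    div_ne_zero (mul_ne_zero hcb hce) (mul_ne_zero hcc hcd)
  have hX2ne : (K a * K f) / (K c * d) ≠ 0 :=
    div_ne_zero (mul_ne_zero hca hcf) (mul_ne_zero hcc hd)
  have hwne : (K a * b * K e * f) / (c * K c * d * K d) ≠ 0 :=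
    div_ne_zero (mul_ne_zero (mul_ne_zero (mul_ne_zero hca hb) hce) hf)
      (mul_ne_zero (mul_ne_zero (mul_ne_zero hc hcc) hd) hcd)
  obtain ⟨h1, h2, h3⟩ := analytic_lemma _ _ _ (habs_lemma a b c d e f hc hd)
    hX1ne hX2ne hwne (hA1_lemma a b c d e f hc hd hdet) heq
  refine ⟨h1, h2, ?_⟩
  rw [hX3_lemma a b c d e f hb hc hd he]
  set w : ℂ := (K a * b * K e * f) / (c * K c * d * K d) with hw_def
  set X1 : ℂ := (K b * K e) / (K c * K d) with hX1_def
  have hKw : K w = w := Complex.conj_eq_iff_im.mpr h3.1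
  have hwre : w = ((w.re : ℝ) : ℂ) := Complex.ext rfl (by simp [h3.1])
  have hfinal : K w / (X1 * K X1) = ((w.re / Complex.normSq X1 : ℝ) : ℂ) := by
    rw [hKw, Complex.mul_conj, Complex.ofReal_div, ← hwre]
  rw [hfinal]
  refine ⟨by simp, ?_⟩
  simp only [Complex.ofReal_re]
  exact div_pos h3.2 (Complex.normSq_pos.mpr hX1ne)
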